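/- For every nonzero real number a and every (x,y) ∈ ℝ², the map L̃ of Theorem 6.1 satisfies b(L̃(x,y), ∂L̃/∂x(x,y)) = 0 and b(L̃(x,y), ∂L̃/∂y(x,y)) = 0 (as complex numbers); that is, L̃ is a horizontal map with respect to the Hopf fibration π : S⁵₂(1) → CP²₁(4). -/

import Mathlib

open Complex

/-- The index-one Hermitian form `b(z,w) = −conj z₁ · w₁ + conj z₂ · w₂ + conj z₃ · w₃`
on `ℂ³`, over which the pseudo-sphere `S⁵₂(1) = {z : b(z,z) = 1}` and the Hopf
fibration `π : S⁵₂(1) → CP²₁(4)` are defined. -/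
noncomputable def bSph (z w : ℂ × ℂ × ℂ) : ℂ :=
  -(starRingEnd ℂ z.1) * w.1 + (starRingEnd ℂ z.2.1) * w.2.1
    + (starRingEnd ℂ z.2.2) * w.2.2

/-- The horizontal lift `L̃ : ℝ² → ℂ³` of Theorem 6.1 (the timelike first
coordinate carries the `sinh` factor). -/
noncomputable def Lcp (a x y : ℝ) : ℂ × ℂ × ℂ :=
  ((1 / Real.sqrt 3 : ℝ) : ℂ) •
    (((Real.sqrt 2 : ℝ) : ℂ) * Complex.exp (Complex.I * ((x - a ^ 2 * y : ℝ) : ℂ) / (2 * (a : ℂ)))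
        * ((Real.sinh (Real.sqrt 3 * (x + a ^ 2 * y) / (2 * a)) : ℝ) : ℂ),
     Complex.exp (Complex.I * ((a ^ 2 * y - x : ℝ) : ℂ) / (a : ℂ)),
     ((Real.sqrt 2 : ℝ) : ℂ) * Complex.exp (Complex.I * ((x - a ^ 2 * y : ℝ) : ℂ) / (2 * (a : ℂ)))
        * ((Real.cosh (Real.sqrt 3 * (x + a ^ 2 * y) / (2 * a)) : ℝ) : ℂ))

noncomputable def Fgen (c₁ d₁ c₂ d₂ c₃ d₃ : ℝ) (t : ℝ) : ℂ × ℂ × ℂ :=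
  ((1 / Real.sqrt 3 : ℝ) : ℂ) •
    (((Real.sqrt 2 : ℝ) : ℂ) * Complex.exp (Complex.I * ((c₁ * t + d₁ : ℝ) : ℂ))
        * ((Real.sinh (c₃ * t + d₃) : ℝ) : ℂ),
     Complex.exp (Complex.I * ((c₂ * t + d₂ : ℝ) : ℂ)),
     ((Real.sqrt 2 : ℝ) : ℂ) * Complex.exp (Complex.I * ((c₁ * t + d₁ : ℝ) : ℂ))
        * ((Real.cosh (c₃ * t + d₃) : ℝ) : ℂ))

lemma hasDerivAt_affine (c d x : ℝ) : HasDerivAt (fun t : ℝ => c * t + d) c x := by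
  simpa using ((hasDerivAt_id x).const_mul c).add_const d

lemma hasDerivAt_expI (c d x : ℝ) :
    HasDerivAt (fun t : ℝ => Complex.exp (Complex.I * ((c * t + d : ℝ) : ℂ)))
      (Complex.exp (Complex.I * ((c * x + d : ℝ) : ℂ)) * (Complex.I * (c : ℂ))) x :=
  (((hasDerivAt_affine c d x).ofReal_comp).const_mul Complex.I).cexp

lemma hasDerivAt_Fgen (c₁ d₁ c₂ d₂ c₃ d₃ x : ℝ) :
    HasDerivAt (Fgen c₁ d₁ c₂ d₂ c₃ d₃)
      (((1 / Real.sqrt 3 : ℝ) : ℂ) •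
        (((Real.sqrt 2 : ℝ) : ℂ) * (Complex.exp (Complex.I * ((c₁ * x + d₁ : ℝ) : ℂ)) * (Complex.I * (c₁ : ℂ)))
            * ((Real.sinh (c₃ * x + d₃) : ℝ) : ℂ)
          + ((Real.sqrt 2 : ℝ) : ℂ) * Complex.exp (Complex.I * ((c₁ * x + d₁ : ℝ) : ℂ))
            * ((Real.cosh (c₃ * x + d₃) * c₃ : ℝ) : ℂ),
         Complex.exp (Complex.I * ((c₂ * x + d₂ : ℝ) : ℂ)) * (Complex.I * (c₂ : ℂ)),
         ((Real.sqrt 2 : ℝ) : ℂ) * (Complex.exp (Complex.I * ((c₁ * x + d₁ : ℝ) : ℂ)) * (Complex.I * (c₁ : ℂ)))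
            * ((Real.cosh (c₃ * x + d₃) : ℝ) : ℂ)
          + ((Real.sqrt 2 : ℝ) : ℂ) * Complex.exp (Complex.I * ((c₁ * x + d₁ : ℝ) : ℂ))
            * ((Real.sinh (c₃ * x + d₃) * c₃ : ℝ) : ℂ))) x := by
  have hS : HasDerivAt (fun t : ℝ => ((Real.sinh (c₃ * t + d₃) : ℝ) : ℂ))
      ((Real.cosh (c₃ * x + d₃) * c₃ : ℝ) : ℂ) x := by
    exact (((Real.hasDerivAt_sinh _).comp x (hasDerivAt_affine c₃ d₃ x))).ofReal_comp
  have hC : HasDerivAt (fun t : ℝ => ((Real.cosh (c₃ * t + d₃) : ℝ) : ℂ))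
      ((Real.sinh (c₃ * x + d₃) * c₃ : ℝ) : ℂ) x := by
    exact (((Real.hasDerivAt_cosh _).comp x (hasDerivAt_affine c₃ d₃ x))).ofReal_comp
  have h1 := (((hasDerivAt_expI c₁ d₁ x).const_mul ((Real.sqrt 2 : ℝ) : ℂ)).mul hS)
  have h3 := (((hasDerivAt_expI c₁ d₁ x).const_mul ((Real.sqrt 2 : ℝ) : ℂ)).mul hC)
  have h2 := hasDerivAt_expI c₂ d₂ x
  have := (h1.prodMk (h2.prodMk h3)).const_smul (((1 / Real.sqrt 3 : ℝ) : ℂ))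
  exact this

lemma bSph_Fgen (c₁ d₁ c₂ d₂ c₃ d₃ x : ℝ) (h : 2 * c₁ + c₂ = 0) :
    bSph (Fgen c₁ d₁ c₂ d₂ c₃ d₃ x) (deriv (Fgen c₁ d₁ c₂ d₂ c₃ d₃) x) = 0 := by
  rw [(hasDerivAt_Fgen c₁ d₁ c₂ d₂ c₃ d₃ x).deriv]
  have h1 : Complex.exp (-(Complex.I * ((c₁ * x + d₁ : ℝ) : ℂ))) *
      Complex.exp (Complex.I * ((c₁ * x + d₁ : ℝ) : ℂ)) = 1 := by
    rw [← Complex.exp_add]; simp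
  have h2 : Complex.exp (-(Complex.I * ((c₂ * x + d₂ : ℝ) : ℂ))) *
      Complex.exp (Complex.I * ((c₂ * x + d₂ : ℝ) : ℂ)) = 1 := by
    rw [← Complex.exp_add]; simp
  have hsc : ((Real.cosh (c₃ * x + d₃) : ℝ) : ℂ) ^ 2 - ((Real.sinh (c₃ * x + d₃) : ℝ) : ℂ) ^ 2 = 1 := by
    exact_mod_cast congrArg (Complex.ofReal) (Real.cosh_sq_sub_sinh_sq (c₃ * x + d₃))
  have hc2 : 2 * (c₁ : ℂ) + (c₂ : ℂ) = 0 := by exact_mod_cast congrArg (Complex.ofReal) h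
  have hs2 : ((Real.sqrt 2 : ℝ) : ℂ) ^ 2 = 2 := by
    norm_cast
    exact Real.sq_sqrt (by norm_num)
  simp only [bSph, Fgen, Prod.smul_fst, Prod.smul_snd, smul_eq_mul, map_mul,
    Complex.conj_ofReal, ← Complex.exp_conj, Complex.conj_I, neg_mul, Complex.ofReal_mul]
  set k : ℂ := ((1 / Real.sqrt 3 : ℝ) : ℂ) with hk
  set s : ℂ := ((Real.sinh (c₃ * x + d₃) : ℝ) : ℂ) with hs
  set c : ℂ := ((Real.cosh (c₃ * x + d₃) : ℝ) : ℂ) with hc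
  linear_combination
    (k^2 * ((Real.sqrt 2 : ℝ) : ℂ)^2 * Complex.I * (c₁ : ℂ) * (c^2 - s^2)) * h1 +
    (k^2 * Complex.I * (c₂ : ℂ)) * h2 +
    (k^2 * ((Real.sqrt 2 : ℝ) : ℂ)^2 * Complex.I * (c₁ : ℂ)) * hsc +
    (k^2 * Complex.I) * hc2 +
    (k^2 * Complex.I * (c₁ : ℂ)) * hs2

/-- Theorem 6.1: `L̃` is horizontal with respect to the Hopf fibration
`π : S⁵₂(1) → CP²₁(4)`: each partial derivative is `b`-orthogonal over `ℂ`
to the position vector. -/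
theorem Lcp_horizontal (a : ℝ) (ha : a ≠ 0) :
    ∀ x y : ℝ,
      bSph (Lcp a x y) (deriv (fun t => Lcp a t y) x) = 0 ∧
      bSph (Lcp a x y) (deriv (fun t => Lcp a x t) y) = 0 := by
  intro x y
  constructor
  · have hfun : (fun t => Lcp a t y) =
        Fgen (1/(2*a)) (-(a^2*y)/(2*a)) (-(1/a)) (a^2*y/a)
          (Real.sqrt 3/(2*a)) (Real.sqrt 3*(a^2*y)/(2*a)) := by
      funext t
      have e1 : Complex.I * ((t - a ^ 2 * y : ℝ) : ℂ) / (2 * (a : ℂ)) =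
          Complex.I * (((1/(2*a)) * t + (-(a^2*y)/(2*a)) : ℝ) : ℂ) := by
        push_cast; ring
      have e2 : Complex.I * ((a ^ 2 * y - t : ℝ) : ℂ) / ((a : ℂ)) =
          Complex.I * (((-(1/a)) * t + (a^2*y/a) : ℝ) : ℂ) := by
        push_cast; ring
      have e3 : Real.sqrt 3 * (t + a ^ 2 * y) / (2 * a) =
          (Real.sqrt 3/(2*a)) * t + Real.sqrt 3*(a^2*y)/(2*a) := by ring
      simp only [Lcp, Fgen]
      rw [e1, e2, e3]
    rw [hfun, show Lcp a x y = Fgen (1/(2*a)) (-(a^2*y)/(2*a)) (-(1/a)) (a^2*y/a)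
          (Real.sqrt 3/(2*a)) (Real.sqrt 3*(a^2*y)/(2*a)) x from congrFun hfun x]
    exact bSph_Fgen _ _ _ _ _ _ x (by field_simp; ring)
  · have hfun : (fun t => Lcp a x t) =
        Fgen (-(a^2)/(2*a)) (x/(2*a)) (a^2/a) (-(x/a))
          (Real.sqrt 3*a^2/(2*a)) (Real.sqrt 3*x/(2*a)) := by
      funext t
      have e1 : Complex.I * ((x - a ^ 2 * t : ℝ) : ℂ) / (2 * (a : ℂ)) =
          Complex.I * (((-(a^2)/(2*a)) * t + (x/(2*a)) : ℝ) : ℂ) := by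
        push_cast; ring
      have e2 : Complex.I * ((a ^ 2 * t - x : ℝ) : ℂ) / ((a : ℂ)) =
          Complex.I * (((a^2/a) * t + (-(x/a)) : ℝ) : ℂ) := by
        push_cast; ring
      have e3 : Real.sqrt 3 * (x + a ^ 2 * t) / (2 * a) =
          (Real.sqrt 3*a^2/(2*a)) * t + Real.sqrt 3*x/(2*a) := by ring
      simp only [Lcp, Fgen]
      rw [e1, e2, e3]
    rw [hfun, show Lcp a x y = Fgen (-(a^2)/(2*a)) (x/(2*a)) (a^2/a) (-(x/a))
          (Real.sqrt 3*a^2/(2*a)) (Real.sqrt 3*x/(2*a)) y from congrFun hfun y]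
    exact bSph_Fgen _ _ _ _ _ _ y (by ring)
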